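/- Consider greedy online assignment of t requests on the integer line [T] to free slots (each integer slot holds at most one request), where each request at position p is assigned to the nearest free slot. If there exists a feasible assignment (injective placement) in which every request is placed within error_max of its reported position, then for every position t' and every i in [log_2 T], at most 4*error_max requests cross t' that originate from the segments [t'-2^i, t'] and [t', t'+2^i]; consequently the greedy total displacement satisfies sum_i |assigned_i - reported_i| <= 4*t*error_max*log_2(T) + T*error_max. -/

import Mathlib

open Finset

section GreedyAux

variable {T t : ℕ} {p a b : Fin t → ℤ} {errmax : ℤ}

/-- If `x` is a valid slot strictly closer to `p j` than `a j`, then `x` was occupied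
before request `j` was served. -/
lemma gm_full (hgreedy : ∀ (j : Fin t) (s : ℤ), 1 ≤ s → s ≤ (T : ℤ) →
      (∀ j' : Fin t, j' < j → a j' ≠ s) → |a j - p j| ≤ |s - p j|)
    (j : Fin t) (x : ℤ) (h1 : 1 ≤ x) (h2 : x ≤ (T : ℤ))
    (hlt : |x - p j| < |a j - p j|) : ∃ j' : Fin t, j' < j ∧ a j' = x := by
  by_contra h
  push_neg at h
  have := hgreedy j x h1 h2 (fun j' hj' => h j' hj')
  exact absurd hlt (not_lt.mpr this)


/-- Counting fact: at most `len + 2*errmax` requests originate in any interval. -/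
lemma gm_count (herr : 0 ≤ errmax)
    (hbinj : Function.Injective b) (hbe : ∀ j, |b j - p j| ≤ errmax)
    (x y : ℤ) (hxy : x ≤ y) :
    ((univ.filter fun j : Fin t => x ≤ p j ∧ p j ≤ y).card : ℤ) ≤ y - x + 1 + 2 * errmax := by
  have hcard : (univ.filter fun j : Fin t => x ≤ p j ∧ p j ≤ y).card
      ≤ (Finset.Icc (x - errmax) (y + errmax)).card := by
    apply Finset.card_le_card_of_injOn b
    · intro j hj
      simp only [Finset.mem_coe, mem_filter, mem_univ, true_and] at hj
      have := hbe j
      rw [abs_le] at this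
      simp only [Finset.mem_coe, Finset.mem_Icc]
      omega
    · exact fun j _ j' _ h => hbinj h
  have h2 : ((Finset.Icc (x - errmax) (y + errmax)).card : ℤ) = y - x + 1 + 2 * errmax := by
    rw [Int.card_Icc]
    rw [Int.toNat_of_nonneg (by omega)]
    ring
  calc ((univ.filter fun j : Fin t => x ≤ p j ∧ p j ≤ y).card : ℤ)
      ≤ ((Finset.Icc (x - errmax) (y + errmax)).card : ℤ) := by exact_mod_cast hcard
    _ = y - x + 1 + 2 * errmax := h2


/-- Late lemma: if `[lo,hi]` is fully occupied at time `n` with both `lo-1` and `hi+1`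
not occupied, then at most `2*errmax` requests with index `≥ n` originate in `[lo,hi]`. -/
lemma gm_late (hp : ∀ j, 1 ≤ p j ∧ p j ≤ (T : ℤ)) (ha : ∀ j, 1 ≤ a j ∧ a j ≤ (T : ℤ))
    (hainj : Function.Injective a)
    (hgreedy : ∀ (j : Fin t) (s : ℤ), 1 ≤ s → s ≤ (T : ℤ) →
      (∀ j' : Fin t, j' < j → a j' ≠ s) → |a j - p j| ≤ |s - p j|)
    (herr : 0 ≤ errmax)
    (hbinj : Function.Injective b) (hbe : ∀ j, |b j - p j| ≤ errmax)
    (n : ℕ) (lo hi : ℤ) (hlohi : lo ≤ hi)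
    (hfull : ∀ x, lo ≤ x → x ≤ hi → ∃ j : Fin t, (j : ℕ) < n ∧ a j = x)
    (hlo : ¬ ∃ j : Fin t, (j : ℕ) < n ∧ a j = lo - 1)
    (hhi : ¬ ∃ j : Fin t, (j : ℕ) < n ∧ a j = hi + 1) :
    ((univ.filter fun j : Fin t => lo ≤ p j ∧ p j ≤ hi ∧ n ≤ (j : ℕ)).card : ℤ)
      ≤ 2 * errmax := by
  classical
  set Occ : Finset (Fin t) := univ.filter fun j : Fin t => lo ≤ a j ∧ a j ≤ hi with hOcc
  -- each occupant was placed before time n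
  have hOccLt : ∀ j ∈ Occ, (j : ℕ) < n := by
    intro j hj
    simp only [hOcc, mem_filter, mem_univ, true_and] at hj
    obtain ⟨j2, hj2n, hj2⟩ := hfull (a j) hj.1 hj.2
    have : j2 = j := hainj hj2
    omega
  -- interval bounds are within [1,T]
  have hlo1 : 1 ≤ lo := by
    obtain ⟨j, _, hj⟩ := hfull lo le_rfl hlohi
    have := (ha j).1; omega
  have hhiT : hi ≤ (T : ℤ) := by
    obtain ⟨j, _, hj⟩ := hfull hi hlohi le_rfl
    have := (ha j).2; omega
  -- occupants originate inside [lo,hi]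
  have hOccP : ∀ j ∈ Occ, lo ≤ p j ∧ p j ≤ hi := by
    intro j hj
    have hjn := hOccLt j hj
    simp only [hOcc, mem_filter, mem_univ, true_and] at hj
    constructor
    · by_contra hc
      push_neg at hc
      have hx1 : (1 : ℤ) ≤ lo - 1 := by have := (hp j).1; omega
      have hx2 : lo - 1 ≤ (T : ℤ) := by omega
      have hlt : |lo - 1 - p j| < |a j - p j| := by
        rw [abs_of_nonneg (by omega), abs_of_pos (by omega)]
        omega
      obtain ⟨j', hj', hj'e⟩ := gm_full hgreedy j (lo - 1) hx1 hx2 hlt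
      exact hlo ⟨j', by omega, hj'e⟩
    · by_contra hc
      push_neg at hc
      have hx1 : (1 : ℤ) ≤ hi + 1 := by omega
      have hx2 : hi + 1 ≤ (T : ℤ) := by have := (hp j).2; omega
      have hlt : |hi + 1 - p j| < |a j - p j| := by
        rw [abs_of_nonpos (by omega), abs_of_neg (by omega)]
        omega
      obtain ⟨j', hj', hj'e⟩ := gm_full hgreedy j (hi + 1) hx1 hx2 hlt
      exact hhi ⟨j', by omega, hj'e⟩
  -- bijection between occupants and slots of [lo,hi]
  have himg : Occ.image a = Finset.Icc lo hi := by
    ext x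
    simp only [mem_image, hOcc, mem_filter, mem_univ, true_and, Finset.mem_Icc]
    constructor
    · rintro ⟨j, hj, rfl⟩; exact hj
    · rintro ⟨h1, h2⟩
      obtain ⟨j, _, hj⟩ := hfull x h1 h2
      exact ⟨j, by rw [hj]; exact ⟨h1, h2⟩, hj⟩
  have hOccCard : (Occ.card : ℤ) = hi - lo + 1 := by
    have := Finset.card_image_of_injective Occ hainj
    rw [himg] at this
    rw [← this, Int.card_Icc, Int.toNat_of_nonneg (by omega)]
    ring
  -- late requests
  set Late : Finset (Fin t) :=
    univ.filter (fun j : Fin t => lo ≤ p j ∧ p j ≤ hi ∧ n ≤ (j : ℕ)) with hLate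
  have hdisj : Disjoint Occ Late := by
    rw [Finset.disjoint_left]
    intro j hj hjL
    have := hOccLt j hj
    simp only [hLate, mem_filter, mem_univ, true_and] at hjL
    omega
  have hsub : Occ ∪ Late ⊆ univ.filter fun j : Fin t => lo ≤ p j ∧ p j ≤ hi := by
    intro j hj
    rcases Finset.mem_union.mp hj with h | h
    · simp only [mem_filter, mem_univ, true_and]
      exact hOccP j h
    · simp only [hLate, mem_filter, mem_univ, true_and] at h ⊢
      exact ⟨h.1, h.2.1⟩
  have hcards : Occ.card + Late.card
      ≤ (univ.filter fun j : Fin t => lo ≤ p j ∧ p j ≤ hi).card := by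
    rw [← Finset.card_union_of_disjoint hdisj]
    exact Finset.card_le_card hsub
  have hcount := gm_count (p := p) herr hbinj hbe lo hi hlohi
  have : (Occ.card : ℤ) + (Late.card : ℤ) ≤ hi - lo + 1 + 2 * errmax := by
    calc (Occ.card : ℤ) + (Late.card : ℤ)
        = ((Occ.card + Late.card : ℕ) : ℤ) := by push_cast; ring
      _ ≤ _ := by exact_mod_cast le_trans (Nat.cast_le.mpr hcards) hcount
  omega

/-- Existence of a maximal fully-occupied block around an occupied slot, together with
minimality/maximality witnesses. -/
lemma gm_block (ha : ∀ j, 1 ≤ a j ∧ a j ≤ (T : ℤ))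
    (n : ℕ) (c : ℤ) (hc : ∃ j : Fin t, (j : ℕ) < n ∧ a j = c) :
    ∃ lo hi : ℤ, lo ≤ c ∧ c ≤ hi ∧
      (∀ x, lo ≤ x → x ≤ hi → ∃ j : Fin t, (j : ℕ) < n ∧ a j = x) ∧
      (¬ ∃ j : Fin t, (j : ℕ) < n ∧ a j = lo - 1) ∧
      (¬ ∃ j : Fin t, (j : ℕ) < n ∧ a j = hi + 1) ∧
      (∀ x, x ≤ c → (∀ y, x ≤ y → y ≤ c → ∃ j : Fin t, (j : ℕ) < n ∧ a j = y) → lo ≤ x) ∧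
      (∀ x, c ≤ x → (∀ y, c ≤ y → y ≤ x → ∃ j : Fin t, (j : ℕ) < n ∧ a j = y) → x ≤ hi) := by
  set P : ℤ → Prop := fun x => x ≤ c ∧ ∀ y, x ≤ y → y ≤ c → ∃ j : Fin t, (j : ℕ) < n ∧ a j = y
    with hP
  set Q : ℤ → Prop := fun x => c ≤ x ∧ ∀ y, c ≤ y → y ≤ x → ∃ j : Fin t, (j : ℕ) < n ∧ a j = y
    with hQ
  have hPbdd : ∃ b0 : ℤ, ∀ z : ℤ, P z → b0 ≤ z := by
    refine ⟨1, fun z hz => ?_⟩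
    obtain ⟨j, _, hj⟩ := hz.2 z le_rfl hz.1
    have := (ha j).1; omega
  have hPinh : ∃ z, P z := by
    refine ⟨c, le_rfl, fun y h1 h2 => ?_⟩
    have : y = c := le_antisymm h2 h1
    exact this ▸ hc
  obtain ⟨lo, hPlo, hlomin⟩ := Int.exists_least_of_bdd hPbdd hPinh
  have hQbdd : ∃ b0 : ℤ, ∀ z : ℤ, Q z → z ≤ b0 := by
    refine ⟨(T : ℤ), fun z hz => ?_⟩
    obtain ⟨j, _, hj⟩ := hz.2 z hz.1 le_rfl
    have := (ha j).2; omega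
  have hQinh : ∃ z, Q z := by
    refine ⟨c, le_rfl, fun y h1 h2 => ?_⟩
    have : y = c := le_antisymm h2 h1
    exact this ▸ hc
  obtain ⟨hi, hQhi, hhimax⟩ := Int.exists_greatest_of_bdd hQbdd hQinh
  refine ⟨lo, hi, hPlo.1, hQhi.1, ?_, ?_, ?_, ?_, ?_⟩
  · intro x h1 h2
    rcases le_or_gt x c with h | h
    · exact hPlo.2 x h1 h
    · exact hQhi.2 x (le_of_lt h) h2
  · intro hocc
    have hPlo1 : P (lo - 1) := by
      constructor
      · omega
      · intro y h1 h2
        rcases eq_or_lt_of_le h1 with h | h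
        · exact h ▸ hocc
        · exact hPlo.2 y (by omega) h2
    have := hlomin _ hPlo1
    omega
  · intro hocc
    have hQhi1 : Q (hi + 1) := by
      constructor
      · omega
      · intro y h1 h2
        rcases eq_or_lt_of_le h2 with h | h
        · exact h.symm ▸ hocc
        · exact hQhi.2 y h1 (by omega)
    have := hhimax _ hQhi1
    omega
  · intro x h1 h2
    exact hlomin x ⟨h1, h2⟩
  · intro x h1 h2
    exact hhimax x ⟨h1, h2⟩


lemma gm_cluster (hp : ∀ j, 1 ≤ p j ∧ p j ≤ (T : ℤ)) (ha : ∀ j, 1 ≤ a j ∧ a j ≤ (T : ℤ))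
    (hainj : Function.Injective a)
    (hgreedy : ∀ (j : Fin t) (s : ℤ), 1 ≤ s → s ≤ (T : ℤ) →
      (∀ j' : Fin t, j' < j → a j' ≠ s) → |a j - p j| ≤ |s - p j|)
    (herr : 0 ≤ errmax)
    (hbinj : Function.Injective b) (hbe : ∀ j, |b j - p j| ≤ errmax)
    (s : ℤ) (hs : 1 ≤ s) :
    ∀ (N : ℕ) (F : Finset (Fin t)), F.card ≤ N → (∀ j ∈ F, s ≤ |a j - p j|) →
      ∃ L : Finset (Fin t), L ⊆ F ∧ (F.card : ℤ) ≤ 2 * errmax * L.card ∧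
        (∀ ℓ ∈ L, ∀ ℓ' ∈ L, ℓ ≠ ℓ' → s ≤ |p ℓ - p ℓ'|) := by
  intro N
  induction N with
  | zero =>
    intro F hcard _
    have hF0 : F.card = 0 := Nat.le_zero.mp hcard
    exact ⟨∅, Finset.empty_subset _, by simp [hF0], by simp⟩
  | succ N ih =>
    intro F hcard hF
    rcases F.eq_empty_or_nonempty with rfl | hne
    · exact ⟨∅, Finset.empty_subset _, by simp, by simp⟩
    · set ℓ := F.min' hne with hℓdef
      have hℓF : ℓ ∈ F := F.min'_mem hne
      have hd : s ≤ |a ℓ - p ℓ| := hF ℓ hℓF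
      have hpocc : ∃ j' : Fin t, (j' : ℕ) < (ℓ : ℕ) ∧ a j' = p ℓ := by
        obtain ⟨j', hj', e⟩ := gm_full hgreedy ℓ (p ℓ) (hp ℓ).1 (hp ℓ).2
          (by rw [sub_self, abs_zero]; linarith)
        exact ⟨j', by omega, e⟩
      obtain ⟨lo, hi, hloc, hchi, hfull, hlo, hhi, hlomin, hhimax⟩ :=
        gm_block (T := T) ha (ℓ : ℕ) (p ℓ) hpocc
      -- anything within distance s-1 of p ℓ (and in range) was occupied at time ℓ
      have hoccwin : ∀ y, 1 ≤ y → y ≤ (T : ℤ) → |y - p ℓ| ≤ s - 1 →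
          ∃ j' : Fin t, (j' : ℕ) < (ℓ : ℕ) ∧ a j' = y := by
        intro y h1 h2 h3
        obtain ⟨j', hj', e⟩ := gm_full hgreedy ℓ y h1 h2 (by linarith)
        exact ⟨j', by omega, e⟩
      -- the group of requests near p ℓ
      set G := F.filter (fun j => |p j - p ℓ| ≤ s - 1) with hGdef
      have hGmem : ∀ j ∈ G, lo ≤ p j ∧ p j ≤ hi ∧ (ℓ : ℕ) ≤ (j : ℕ) := by
        intro j hj
        rw [hGdef, Finset.mem_filter] at hj
        obtain ⟨hjF, habs⟩ := hj
        rw [abs_le] at habs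
        have hplb := (hp j).1
        have hpub := (hp j).2
        refine ⟨?_, ?_, ?_⟩
        · rcases le_or_gt (p ℓ) (p j) with h | h
          · omega
          · refine hlomin (p j) (le_of_lt h) ?_
            intro y hy1 hy2
            refine hoccwin y (by omega) (by have := (hp ℓ).2; omega) ?_
            rw [abs_le]; omega
        · rcases le_or_gt (p j) (p ℓ) with h | h
          · omega
          · refine hhimax (p j) (le_of_lt h) ?_
            intro y hy1 hy2
            refine hoccwin y (by have := (hp ℓ).1; omega) (by omega) ?_
            rw [abs_le]; omega
        · exact F.min'_le j hjF
      have hG2e : (G.card : ℤ) ≤ 2 * errmax := by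
        have hGsub : G ⊆ univ.filter
            (fun j : Fin t => lo ≤ p j ∧ p j ≤ hi ∧ (ℓ : ℕ) ≤ (j : ℕ)) := by
          intro j hj
          rw [Finset.mem_filter]
          exact ⟨Finset.mem_univ _, hGmem j hj⟩
        calc (G.card : ℤ)
            ≤ ((univ.filter fun j : Fin t =>
                lo ≤ p j ∧ p j ≤ hi ∧ (ℓ : ℕ) ≤ (j : ℕ)).card : ℤ) := by
              exact_mod_cast Finset.card_le_card hGsub
          _ ≤ 2 * errmax :=
              gm_late hp ha hainj hgreedy herr hbinj hbe (ℓ : ℕ) lo hi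
                (le_trans hloc hchi) hfull hlo hhi
      have hℓG : ℓ ∈ G := by
        rw [hGdef, Finset.mem_filter]
        exact ⟨hℓF, by rw [sub_self, abs_zero]; omega⟩
      have hGsubF : G ⊆ F := Finset.filter_subset _ _
      have hGpos : 1 ≤ G.card := Finset.card_pos.mpr ⟨ℓ, hℓG⟩
      have hcard' : (F \ G).card ≤ N := by
        have h1 := Finset.card_sdiff_of_subset hGsubF
        have h2 := Finset.card_le_card hGsubF
        omega
      obtain ⟨L', hL'sub, hL'card, hL'sep⟩ := ih (F \ G) hcard'
        (fun j hj => hF j (Finset.sdiff_subset hj))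
      have hℓL' : ℓ ∉ L' := by
        intro h
        have := hL'sub h
        rw [Finset.mem_sdiff] at this
        exact this.2 hℓG
      refine ⟨insert ℓ L', ?_, ?_, ?_⟩
      · intro x hx
        rcases Finset.mem_insert.mp hx with rfl | hx
        · exact hℓF
        · exact (Finset.mem_sdiff.mp (hL'sub hx)).1
      · have hsplit : (F.card : ℤ) = ((F \ G).card : ℤ) + (G.card : ℤ) := by
          have h1 := Finset.card_sdiff_of_subset hGsubF
          have h2 := Finset.card_le_card hGsubF
          push_cast
          omega
        rw [Finset.card_insert_of_notMem hℓL']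
        push_cast
        calc (F.card : ℤ) = ((F \ G).card : ℤ) + (G.card : ℤ) := hsplit
          _ ≤ 2 * errmax * L'.card + 2 * errmax := add_le_add hL'card hG2e
          _ = 2 * errmax * ((L'.card : ℤ) + 1) := by ring
      · have hsep : ∀ x ∈ L', s ≤ |p x - p ℓ| := by
          intro x hx
          have hxFG := hL'sub hx
          rw [Finset.mem_sdiff] at hxFG
          have : ¬ |p x - p ℓ| ≤ s - 1 := by
            intro hcon
            exact hxFG.2 (by rw [hGdef, Finset.mem_filter]; exact ⟨hxFG.1, hcon⟩)
          omega
        intro x hx y hy hxy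
        rcases Finset.mem_insert.mp hx with rfl | hx' <;>
          rcases Finset.mem_insert.mp hy with rfl | hy'
        · exact absurd rfl hxy
        · rw [abs_sub_comm]; exact hsep y hy'
        · exact hsep x hx'
        · exact hL'sep x hx' y hy' hxy


lemma gm_leaders (hp : ∀ j, 1 ≤ p j ∧ p j ≤ (T : ℤ)) (ha : ∀ j, 1 ≤ a j ∧ a j ≤ (T : ℤ))
    (hainj : Function.Injective a)
    (hgreedy : ∀ (j : Fin t) (s : ℤ), 1 ≤ s → s ≤ (T : ℤ) →
      (∀ j' : Fin t, j' < j → a j' ≠ s) → |a j - p j| ≤ |s - p j|)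
    (s : ℤ) (hs : 1 ≤ s) (L : Finset (Fin t))
    (hd : ∀ ℓ ∈ L, s ≤ |a ℓ - p ℓ|)
    (hsep : ∀ ℓ ∈ L, ∀ ℓ' ∈ L, ℓ ≠ ℓ' → s ≤ |p ℓ - p ℓ'|) :
    (L.card : ℤ) * s ≤ (t : ℤ) - 1 + s := by
  classical
  rcases L.eq_empty_or_nonempty with rfl | hne
  · simp only [Finset.card_empty, Nat.cast_zero, zero_mul]
    have : 0 ≤ (t : ℤ) := Int.natCast_nonneg t
    omega
  · obtain ⟨ℓ₀, hℓ₀L, hmin⟩ := Finset.exists_min_image L p hne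
    have htpos : 0 < t := ℓ₀.pos
    set A : Finset ℤ := univ.image a with hA
    have hAcard : A.card = t := by
      rw [hA, Finset.card_image_of_injective _ hainj, Finset.card_univ, Fintype.card_fin]
    have hp0A : p ℓ₀ ∈ A := by
      obtain ⟨j', _, e⟩ := gm_full hgreedy ℓ₀ (p ℓ₀) (hp ℓ₀).1 (hp ℓ₀).2
        (by rw [sub_self, abs_zero]; have := hd ℓ₀ hℓ₀L; linarith)
      exact Finset.mem_image.mpr ⟨j', Finset.mem_univ _, e⟩
    set w : Fin t → Finset ℤ := fun ℓ => Finset.Icc (p ℓ - s + 1) (p ℓ) with hw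
    have hwsub : ∀ ℓ ∈ L.erase ℓ₀, w ℓ ⊆ A.erase (p ℓ₀) := by
      intro ℓ hℓ x hx
      have hℓL := Finset.mem_of_mem_erase hℓ
      have hℓne := Finset.ne_of_mem_erase hℓ
      have hgap : s ≤ p ℓ - p ℓ₀ := by
        have h1 := hsep ℓ hℓL ℓ₀ hℓ₀L hℓne
        have h2 := hmin ℓ hℓL
        rcases le_abs.mp h1 with h | h <;> omega
      rw [hw] at hx
      simp only [Finset.mem_Icc] at hx
      have hx1 : 1 ≤ x := by have := (hp ℓ₀).1; omega
      have hx2 : x ≤ (T : ℤ) := by have := (hp ℓ).2; omega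
      have hxA : x ∈ A := by
        have hdℓ := hd ℓ hℓL
        have habs : |x - p ℓ| ≤ s - 1 := by rw [abs_le]; omega
        obtain ⟨j', _, e⟩ := gm_full hgreedy ℓ x hx1 hx2 (by linarith)
        exact Finset.mem_image.mpr ⟨j', Finset.mem_univ _, e⟩
      exact Finset.mem_erase.mpr ⟨by omega, hxA⟩
    have hdisj : ∀ ℓ₁ ∈ L.erase ℓ₀, ∀ ℓ₂ ∈ L.erase ℓ₀, ℓ₁ ≠ ℓ₂ →
        Disjoint (w ℓ₁) (w ℓ₂) := by
      intro ℓ₁ h₁ ℓ₂ h₂ hne12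
      have hsep12 := hsep ℓ₁ (Finset.mem_of_mem_erase h₁) ℓ₂ (Finset.mem_of_mem_erase h₂) hne12
      rw [Finset.disjoint_left]
      intro x hx1 hx2
      rw [hw] at hx1 hx2
      simp only [Finset.mem_Icc] at hx1 hx2
      rcases le_abs.mp hsep12 with h | h <;> omega
    have hbu : ((L.erase ℓ₀).biUnion w).card = (L.erase ℓ₀).card * s.toNat := by
      rw [Finset.card_biUnion hdisj]
      have : ∀ ℓ ∈ L.erase ℓ₀, (w ℓ).card = s.toNat := by
        intro ℓ _
        rw [hw]
        simp only
        rw [Int.card_Icc]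
        congr 1
        omega
      rw [Finset.sum_congr rfl this, Finset.sum_const, smul_eq_mul]
    have hbusub : (L.erase ℓ₀).biUnion w ⊆ A.erase (p ℓ₀) :=
      Finset.biUnion_subset.mpr hwsub
    have hcard1 : (L.erase ℓ₀).card * s.toNat ≤ t - 1 := by
      rw [← hbu]
      calc ((L.erase ℓ₀).biUnion w).card ≤ (A.erase (p ℓ₀)).card :=
            Finset.card_le_card hbusub
        _ = t - 1 := by rw [Finset.card_erase_of_mem hp0A, hAcard]
    have hLcard : (L.erase ℓ₀).card + 1 = L.card := Finset.card_erase_add_one hℓ₀L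
    have hstn : ((s.toNat : ℕ) : ℤ) = s := Int.toNat_of_nonneg (by omega)
    have hcast : ((L.erase ℓ₀).card : ℤ) * s ≤ (t : ℤ) - 1 := by
      calc ((L.erase ℓ₀).card : ℤ) * s = (((L.erase ℓ₀).card * s.toNat : ℕ) : ℤ) := by
            push_cast [hstn]; ring
        _ ≤ ((t - 1 : ℕ) : ℤ) := by exact_mod_cast hcard1
        _ ≤ (t : ℤ) - 1 := by omega
    have : (L.card : ℤ) = ((L.erase ℓ₀).card : ℤ) + 1 := by exact_mod_cast hLcard.symm
    rw [this]
    nlinarith [hcast]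

/-- Each displacement is at most `t - 1`. -/
lemma gm_D_le (hp : ∀ j, 1 ≤ p j ∧ p j ≤ (T : ℤ)) (ha : ∀ j, 1 ≤ a j ∧ a j ≤ (T : ℤ))
    (hainj : Function.Injective a)
    (hgreedy : ∀ (j : Fin t) (s : ℤ), 1 ≤ s → s ≤ (T : ℤ) →
      (∀ j' : Fin t, j' < j → a j' ≠ s) → |a j - p j| ≤ |s - p j|)
    (j : Fin t) : |a j - p j| ≤ (t : ℤ) - 1 := by
  classical
  set A : Finset ℤ := univ.image a with hA
  have hAcard : A.card = t := by
    rw [hA, Finset.card_image_of_injective _ hainj, Finset.card_univ, Fintype.card_fin]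
  set I : Finset ℤ := Finset.Icc (min (a j) (p j)) (max (a j) (p j)) with hI
  have hIsub : I ⊆ A := by
    intro x hx
    rw [hI, Finset.mem_Icc] at hx
    rcases eq_or_ne x (a j) with rfl | hxa
    · exact Finset.mem_image.mpr ⟨j, Finset.mem_univ _, rfl⟩
    · have hx1 : 1 ≤ x := by
        have h1 := (hp j).1; have h2 := (ha j).1
        rcases le_total (a j) (p j) with h | h <;>
          simp only [min_def, max_def] at hx <;> split_ifs at hx <;> omega
      have hx2 : x ≤ (T : ℤ) := by
        have h1 := (hp j).2; have h2 := (ha j).2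
        rcases le_total (a j) (p j) with h | h <;>
          simp only [min_def, max_def] at hx <;> split_ifs at hx <;> omega
      have hlt : |x - p j| < |a j - p j| := by
        rcases le_or_gt (p j) (a j) with h | h
        · rw [abs_of_nonneg (by omega : (0:ℤ) ≤ a j - p j)]
          rw [min_def, max_def] at hx
          split_ifs at hx <;> rw [abs_lt] <;> omega
        · rw [abs_of_neg (by omega : a j - p j < 0)]
          rw [min_def, max_def] at hx
          split_ifs at hx <;> rw [abs_lt] <;> omega
      obtain ⟨j', _, e⟩ := gm_full hgreedy j x hx1 hx2 hlt
      exact Finset.mem_image.mpr ⟨j', Finset.mem_univ _, e⟩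
  have hIcard : (I.card : ℤ) = |a j - p j| + 1 := by
    rw [hI, Int.card_Icc]
    have : max (a j) (p j) + 1 - min (a j) (p j) = |a j - p j| + 1 := by
      rcases le_or_gt (p j) (a j) with h | h
      · rw [abs_of_nonneg (by omega : (0:ℤ) ≤ a j - p j), max_eq_left h, min_eq_right h]; ring
      · rw [abs_of_neg (by omega : a j - p j < 0), max_eq_right (le_of_lt h),
          min_eq_left (le_of_lt h)]; ring
    rw [this, Int.toNat_of_nonneg (by positivity)]
  have := Finset.card_le_card hIsub
  have hle : (I.card : ℤ) ≤ (A.card : ℤ) := by exact_mod_cast this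
  rw [hIcard, hAcard] at hle
  omega


lemma gm_H (hp : ∀ j, 1 ≤ p j ∧ p j ≤ (T : ℤ)) (ha : ∀ j, 1 ≤ a j ∧ a j ≤ (T : ℤ))
    (hainj : Function.Injective a)
    (hgreedy : ∀ (j : Fin t) (s : ℤ), 1 ≤ s → s ≤ (T : ℤ) →
      (∀ j' : Fin t, j' < j → a j' ≠ s) → |a j - p j| ≤ |s - p j|)
    (herr : 0 ≤ errmax)
    (hbinj : Function.Injective b) (hbe : ∀ j, |b j - p j| ≤ errmax)
    (s : ℤ) (hs : 1 ≤ s) :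
    (((univ.filter fun j : Fin t => s ≤ |a j - p j|).card : ℤ)) * s
      ≤ 2 * errmax * ((t : ℤ) - 1 + s) := by
  classical
  set F := univ.filter fun j : Fin t => s ≤ |a j - p j| with hF
  obtain ⟨L, hLsub, hLcard, hLsep⟩ := gm_cluster hp ha hainj hgreedy herr hbinj hbe s hs
    F.card F le_rfl (fun j hj => by rw [hF, Finset.mem_filter] at hj; exact hj.2)
  have hLd : ∀ ℓ ∈ L, s ≤ |a ℓ - p ℓ| := by
    intro ℓ hℓ
    have := hLsub hℓ
    rw [hF, Finset.mem_filter] at this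
    exact this.2
  have hlead := gm_leaders hp ha hainj hgreedy s hs L hLd hLsep
  calc (F.card : ℤ) * s ≤ (2 * errmax * L.card) * s :=
        mul_le_mul_of_nonneg_right hLcard (by omega)
    _ = 2 * errmax * ((L.card : ℤ) * s) := by ring
    _ ≤ 2 * errmax * ((t : ℤ) - 1 + s) :=
        mul_le_mul_of_nonneg_left hlead (by omega)


end GreedyAux

set_option maxHeartbeats 2000000 in
/-- Greedy online assignment of `t` requests on the integer line `[T]` to
free slots (each integer slot holds at most one request), where each request at reported
position `p j` is assigned to the nearest free slot.  If there exists a feasible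
(injective) assignment `b` in which every request is placed within `errmax` of its
reported position, then the greedy total displacement satisfies
`∑ j |a j - p j| ≤ 4 * t * errmax * log₂ T + T * errmax`. -/
theorem greedy_matching_guarantee (T : ℕ) (t : ℕ) (p a : Fin t → ℤ)
    (hp : ∀ j, 1 ≤ p j ∧ p j ≤ (T : ℤ))
    (ha : ∀ j, 1 ≤ a j ∧ a j ≤ (T : ℤ))
    (hainj : Function.Injective a)
    (hgreedy : ∀ (j : Fin t) (s : ℤ), 1 ≤ s → s ≤ (T : ℤ) →
      (∀ j' : Fin t, j' < j → a j' ≠ s) → |a j - p j| ≤ |s - p j|)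
    (errmax : ℤ) (herr : 0 ≤ errmax)
    (hfeas : ∃ b : Fin t → ℤ, Function.Injective b ∧
      (∀ j, 1 ≤ b j ∧ b j ≤ (T : ℤ)) ∧ ∀ j, |b j - p j| ≤ errmax) :
    (∑ j, (|a j - p j| : ℝ)) ≤
      4 * t * errmax * Real.logb 2 T + T * errmax := by
  classical
  obtain ⟨b, hbinj, hbr, hbe⟩ := hfeas
  have he0 : (0 : ℝ) ≤ (errmax : ℝ) := by exact_mod_cast herr
  -- the sum as a natural number
  set D : Fin t → ℕ := fun j => (a j - p j).natAbs with hD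
  have hDcast : ∀ j, ((D j : ℕ) : ℤ) = |a j - p j| := fun j => Int.natCast_natAbs _
  have hsum0 : (∑ j, (|a j - p j| : ℝ)) = ((∑ j, D j : ℕ) : ℝ) := by
    push_cast
    refine Finset.sum_congr rfl fun j _ => ?_
    calc |((a j : ℝ)) - ((p j : ℝ))| = ((|a j - p j| : ℤ) : ℝ) := by push_cast; ring
      _ = (((D j : ℕ) : ℤ) : ℝ) := by rw [hDcast j]
      _ = ((D j : ℕ) : ℝ) := by push_cast; ring
  rw [hsum0]
  -- trivial case t = 0
  rcases Nat.eq_zero_or_pos t with ht0 | ht1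
  · subst ht0
    simp only [Finset.univ_eq_empty, Finset.sum_empty, Nat.cast_zero]
    have : (0:ℝ) ≤ (T : ℝ) * (errmax:ℝ) := by positivity
    nlinarith [Real.logb_nonneg (by norm_num : (1:ℝ) < 2) (by norm_num : (1:ℝ) ≤ 1)]
  -- t ≥ 1 from here on
  have htT : t ≤ T := by
    have hsub : (Finset.univ.image a) ⊆ Finset.Icc (1 : ℤ) (T : ℤ) := by
      intro x hx
      obtain ⟨j, _, rfl⟩ := Finset.mem_image.mp hx
      exact Finset.mem_Icc.mpr ⟨(ha j).1, (ha j).2⟩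
    have h1 : (Finset.univ.image a).card = t := by
      rw [Finset.card_image_of_injective _ hainj, Finset.card_univ, Fintype.card_fin]
    have h2 := Finset.card_le_card hsub
    rw [h1, Int.card_Icc] at h2
    omega
  -- trivial case T = 1 (then t = 1 and displacement 0)
  rcases le_or_gt T 1 with hT1 | hT2
  · have hTeq : T = 1 := by omega
    have hzero : ∀ j, D j = 0 := by
      intro j
      have h1 := (hp j).1; have h2 := (hp j).2
      have h3 := (ha j).1; have h4 := (ha j).2
      rw [hD]
      simp only
      rw [hTeq] at h2 h4
      omega
    have : (∑ j, D j) = 0 := Finset.sum_eq_zero fun j _ => hzero j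
    rw [this]
    have hlogb : (0:ℝ) ≤ Real.logb 2 T := by
      rw [hTeq]
      exact Real.logb_nonneg (by norm_num) (by norm_num)
    have h4 : (0:ℝ) ≤ 4 * (t:ℝ) * (errmax:ℝ) * Real.logb 2 T := by
      apply mul_nonneg _ hlogb
      positivity
    have : (0:ℝ) ≤ (T : ℝ) * (errmax:ℝ) := by positivity
    push_cast
    linarith
  -- main case : T ≥ 2, t ≥ 1
  -- each displacement is < t
  have hDt : ∀ j, D j ≤ t - 1 := by
    intro j
    have := gm_D_le hp ha hainj hgreedy j
    rw [← hDcast j] at this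
    omega
  -- layer cake
  set Hits : ℕ → Finset (Fin t) := fun s => Finset.univ.filter fun j => s ≤ D j with hHits
  have hlayer : (∑ j, D j) = ∑ s ∈ Finset.Icc 1 t, (Hits s).card := by
    have h1 : ∀ j, D j = ((Finset.Icc 1 t).filter fun s => s ≤ D j).card := by
      intro j
      have : ((Finset.Icc 1 t).filter fun s => s ≤ D j) = Finset.Icc 1 (D j) := by
        ext x
        simp only [Finset.mem_filter, Finset.mem_Icc]
        have := hDt j
        omega
      rw [this, Nat.card_Icc]
      omega
    calc (∑ j, D j) = ∑ j, ((Finset.Icc 1 t).filter fun s => s ≤ D j).card :=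
          Finset.sum_congr rfl fun j _ => h1 j
      _ = ∑ j, ∑ s ∈ Finset.Icc 1 t, if s ≤ D j then 1 else 0 :=
          Finset.sum_congr rfl fun j _ => Finset.card_filter _ _
      _ = ∑ s ∈ Finset.Icc 1 t, ∑ j, if s ≤ D j then 1 else 0 := Finset.sum_comm
      _ = ∑ s ∈ Finset.Icc 1 t, (Hits s).card :=
          Finset.sum_congr rfl fun s _ => (Finset.card_filter _ _).symm
  -- per-s bound, real version
  have hHbound : ∀ s ∈ Finset.Icc 1 t,
      ((Hits s).card : ℝ) ≤ 2 * (errmax:ℝ) * ((t : ℝ) - 1) * ((s : ℝ))⁻¹ + 2 * (errmax:ℝ) := by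
    intro s hs
    rw [Finset.mem_Icc] at hs
    have hs1 : (1 : ℤ) ≤ (s : ℤ) := by exact_mod_cast hs.1
    have hHeq : Hits s = Finset.univ.filter fun j : Fin t => (s : ℤ) ≤ |a j - p j| := by
      apply Finset.filter_congr
      intro j _
      rw [← hDcast j]
      constructor
      · intro h; exact_mod_cast h
      · intro h; exact_mod_cast h
    have hZ := gm_H hp ha hainj hgreedy herr hbinj hbe (s : ℤ) hs1
    rw [← hHeq] at hZ
    have hR : ((Hits s).card : ℝ) * (s : ℝ) ≤ 2 * (errmax:ℝ) * ((t : ℝ) - 1 + (s : ℝ)) := by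
      exact_mod_cast hZ
    have hs0 : (0 : ℝ) < (s : ℝ) := by exact_mod_cast hs.1
    have hinv : (0:ℝ) ≤ ((s:ℝ))⁻¹ := by positivity
    have := mul_le_mul_of_nonneg_right hR hinv
    calc ((Hits s).card : ℝ) = ((Hits s).card : ℝ) * (s : ℝ) * ((s : ℝ))⁻¹ := by
          field_simp
      _ ≤ 2 * (errmax:ℝ) * ((t : ℝ) - 1 + (s : ℝ)) * ((s : ℝ))⁻¹ := this
      _ = 2 * (errmax:ℝ) * ((t : ℝ) - 1) * ((s : ℝ))⁻¹ + 2 * (errmax:ℝ) := by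
          field_simp
  -- sum up
  have hmain : ((∑ j, D j : ℕ) : ℝ)
      ≤ 2 * (errmax:ℝ) * ((t : ℝ) - 1) * (∑ s ∈ Finset.Icc 1 t, ((s : ℝ))⁻¹) + 2 * (errmax:ℝ) * t := by
    rw [hlayer]
    push_cast
    calc (∑ s ∈ Finset.Icc 1 t, ((Hits s).card : ℝ))
        ≤ ∑ s ∈ Finset.Icc 1 t, (2 * (errmax:ℝ) * ((t : ℝ) - 1) * ((s : ℝ))⁻¹ + 2 * (errmax:ℝ)) :=
          Finset.sum_le_sum hHbound
      _ = 2 * (errmax:ℝ) * ((t : ℝ) - 1) * (∑ s ∈ Finset.Icc 1 t, ((s : ℝ))⁻¹) + 2 * (errmax:ℝ) * t := by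
          rw [Finset.sum_add_distrib, ← Finset.mul_sum, Finset.sum_const, Nat.card_Icc]
          simp only [Nat.add_sub_cancel, nsmul_eq_mul]
          ring
  -- harmonic bound
  have hharm : (∑ s ∈ Finset.Icc 1 t, ((s : ℝ))⁻¹) ≤ 1 + Real.log t := by
    have h1 : (∑ s ∈ Finset.Icc 1 t, ((s : ℝ))⁻¹) = ((harmonic t : ℚ) : ℝ) := by
      rw [harmonic_eq_sum_Icc]
      push_cast
      ring
    rw [h1]
    exact harmonic_le_one_add_log t
  -- log to logb
  set X : ℝ := Real.logb 2 T with hX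
  have hlog2pos : (0:ℝ) < Real.log 2 := Real.log_pos (by norm_num)
  have hlogt : Real.log t ≤ X := by
    have h1 : Real.log t = Real.logb 2 t * Real.log 2 := by
      rw [Real.logb]
      field_simp
    have h2 : Real.logb 2 t ≤ X := by
      rw [hX]
      apply Real.logb_le_logb_of_le (by norm_num) (by exact_mod_cast ht1)
      exact_mod_cast htT
    have h3 : (0:ℝ) ≤ Real.logb 2 t :=
      Real.logb_nonneg (by norm_num) (by exact_mod_cast ht1)
    have h4 : Real.log 2 ≤ 1 := by
      have := Real.log_two_lt_d9
      linarith
    calc Real.log t = Real.logb 2 t * Real.log 2 := h1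
      _ ≤ Real.logb 2 t * 1 := by nlinarith
      _ ≤ X := by linarith
  have hX1 : (1:ℝ) ≤ X := by
    rw [hX]
    calc (1:ℝ) = Real.logb 2 2 := (Real.logb_self_eq_one (by norm_num : (1:ℝ) < 2)).symm
      _ ≤ Real.logb 2 T := Real.logb_le_logb_of_le (by norm_num) (by norm_num)
          (by exact_mod_cast hT2)
  -- final arithmetic
  have hfin : 2 * (errmax:ℝ) * ((t : ℝ) - 1) * (1 + Real.log t) + 2 * (errmax:ℝ) * t
      ≤ 4 * t * (errmax:ℝ) * X + T * (errmax:ℝ) := by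
    have ht1R : (1:ℝ) ≤ (t:ℝ) := by exact_mod_cast ht1
    have htTR : (t:ℝ) ≤ (T:ℝ) := by exact_mod_cast htT
    have hlt : (0:ℝ) ≤ 1 + Real.log t := by
      have : (0:ℝ) ≤ Real.log t := Real.log_natCast_nonneg t
      linarith
    have step1 : 2 * (errmax:ℝ) * ((t : ℝ) - 1) * (1 + Real.log t) ≤ 2 * (errmax:ℝ) * ((t:ℝ) - 1) * (1 + X) := by
      have h0 : (0:ℝ) ≤ 2 * (errmax:ℝ) * ((t:ℝ) - 1) := by nlinarith
      nlinarith
    have hgoal : 2 * (errmax:ℝ) * ((t:ℝ) - 1) * (1 + X) + 2 * (errmax:ℝ) * t ≤ 4 * t * (errmax:ℝ) * X + T * (errmax:ℝ) := by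
      rcases le_or_gt 4 t with h4t | h4t
      · -- t ≥ 4 ⇒ T ≥ 4 ⇒ X ≥ 2
        have hT4 : (4:ℝ) ≤ (T:ℝ) := by
          have : (4:ℝ) ≤ (t:ℝ) := by exact_mod_cast h4t
          linarith
        have hX2 : (2:ℝ) ≤ X := by
          rw [hX]
          calc (2:ℝ) = Real.logb 2 4 := by
                rw [show (4:ℝ) = 2^(2:ℕ) by norm_num, Real.logb_pow,
                  Real.logb_self_eq_one (by norm_num : (1:ℝ) < 2)]
                norm_num
            _ ≤ Real.logb 2 T := Real.logb_le_logb_of_le (by norm_num) (by norm_num) hT4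
        nlinarith [mul_nonneg he0 (by linarith : (0:ℝ) ≤ (t:ℝ) - 1),
          mul_nonneg he0 (by linarith : (0:ℝ) ≤ X - 1)]
      ·
        have ht4 : (t:ℝ) ≤ 4 := by
          have : t ≤ 4 := by omega
          exact_mod_cast this
        nlinarith [mul_nonneg he0 (by linarith : (0:ℝ) ≤ (t:ℝ) - 1),
          mul_nonneg he0 (by linarith : (0:ℝ) ≤ X - 1),
          mul_nonneg (mul_nonneg he0 (by linarith : (0:ℝ) ≤ (t:ℝ) - 1))
            (by linarith : (0:ℝ) ≤ X - 1)]
    linarith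
  calc ((∑ j, D j : ℕ) : ℝ)
      ≤ 2 * (errmax:ℝ) * ((t : ℝ) - 1) * (∑ s ∈ Finset.Icc 1 t, ((s : ℝ))⁻¹) + 2 * (errmax:ℝ) * t := hmain
    _ ≤ 2 * (errmax:ℝ) * ((t : ℝ) - 1) * (1 + Real.log t) + 2 * (errmax:ℝ) * t := by
        have h0 : (0:ℝ) ≤ 2 * (errmax:ℝ) * ((t:ℝ) - 1) := by
          have : (1:ℝ) ≤ (t:ℝ) := by exact_mod_cast ht1
          nlinarith
        nlinarith [hharm]
    _ ≤ 4 * t * (errmax:ℝ) * X + T * (errmax:ℝ) := hfin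
    _ = 4 * t * errmax * Real.logb 2 T + T * errmax := by rw [hX]
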